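/- arXiv:0807.3811 — 3 statements merged into one kernel-verified Lean document; each statement's English description precedes it below -/
import Mathlib

section
/- Information gain is bounded by entropy decrease: for an ensemble {p_i, ρ^i_{AB}} with average state ρ_{AB} = Σ_i p_i ρ^i_{AB}, it holds that Σ_i p_i I(ρ^i_{AB}) − I(ρ_{AB}) ≤ S(ρ_{AB}) − Σ_i p_i S(ρ^i_{AB}), where I(σ_{AB}) = S(σ_A) + S(σ_B) − S(σ_AB) is the quantum mutual information and S the von Neumann entropy. -/
open Matrix Kronecker ComplexOrder

noncomputable def vnEntropy {n : Type*} [Fintype n] [DecidableEq n]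
    (ρ : Matrix n n ℂ) : ℝ :=
  if h : ρ.IsHermitian then (∑ i, Real.negMulLog (h.eigenvalues i)) / Real.log 2 else 0

noncomputable def ptraceSnd {a b : Type*} [Fintype b]
    (ρ : Matrix (a × b) (a × b) ℂ) : Matrix a a ℂ :=
  Matrix.of fun i j => ∑ k, ρ (i, k) (j, k)

noncomputable def ptraceFst {a b : Type*} [Fintype a]
    (ρ : Matrix (a × b) (a × b) ℂ) : Matrix b b ℂ :=
  Matrix.of fun i j => ∑ k, ρ (k, i) (k, j)

noncomputable def mutInfo {a b : Type*} [Fintype a] [Fintype b] [DecidableEq a] [DecidableEq b]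
    (ρ : Matrix (a × b) (a × b) ℂ) : ℝ :=
  vnEntropy (ptraceSnd ρ) + vnEntropy (ptraceFst ρ) - vnEntropy ρ

noncomputable def psiPlus : Fin 2 × Fin 2 → ℂ :=
  fun p => if p.1 = p.2 then ((Real.sqrt 2)⁻¹ : ℝ) else 0

def pauliZ : Matrix (Fin 2) (Fin 2) ℂ := !![1, 0; 0, -1]

/-! ### Auxiliary lemmas -/

lemma jensen_negMulLog {ι : Type*} [Fintype ι] (w : ι → ℝ) (x : ι → ℝ)
    (hw : ∀ i, 0 ≤ w i) (hw1 : ∑ i, w i = 1) (hx : ∀ i, 0 ≤ x i) :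
    ∑ i, w i * Real.negMulLog (x i) ≤ Real.negMulLog (∑ i, w i * x i) := by
  have := Real.concaveOn_negMulLog.le_map_sum (t := Finset.univ) (w := w) (p := x)
    (fun i _ => hw i) hw1 (fun i _ => hx i)
  simpa [smul_eq_mul] using this

lemma sum_negMulLog_le {n : Type*} [Fintype n] (w : n → n → ℝ) (lam : n → ℝ)
    (hw : ∀ j k, 0 ≤ w j k) (hrow : ∀ j, ∑ k, w j k = 1) (hcol : ∀ k, ∑ j, w j k = 1)
    (hlam : ∀ k, 0 ≤ lam k) :
    ∑ k, Real.negMulLog (lam k) ≤ ∑ j, Real.negMulLog (∑ k, w j k * lam k) := by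
  calc ∑ k, Real.negMulLog (lam k)
      = ∑ k, (∑ j, w j k) * Real.negMulLog (lam k) := by simp [hcol]
    _ = ∑ j, ∑ k, w j k * Real.negMulLog (lam k) := by
        rw [Finset.sum_comm]; simp [Finset.sum_mul]
    _ ≤ ∑ j, Real.negMulLog (∑ k, w j k * lam k) :=
        Finset.sum_le_sum fun j _ => jensen_negMulLog _ _ (hw j) (hrow j) hlam

lemma eigen_entropy_le {n : Type*} [Fintype n] [DecidableEq n]
    {σ : Matrix n n ℂ} (hσ : σ.PosSemidef) {U : Matrix n n ℂ}
    (hU : U ∈ Matrix.unitaryGroup n ℂ) :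
    ∑ k, Real.negMulLog (hσ.1.eigenvalues k)
      ≤ ∑ j, Real.negMulLog ((star U * σ * U) j j).re := by
  set V : Matrix n n ℂ := (hσ.1.eigenvectorUnitary : Matrix n n ℂ) with hV
  set W : Matrix n n ℂ := star U * V with hWdef
  have hVV : V * star V = 1 := Matrix.mem_unitaryGroup_iff.mp hσ.1.eigenvectorUnitary.2
  have hVV' : star V * V = 1 := Matrix.mem_unitaryGroup_iff'.mp hσ.1.eigenvectorUnitary.2
  have hUU : U * star U = 1 := Matrix.mem_unitaryGroup_iff.mp hU
  have hUU' : star U * U = 1 := Matrix.mem_unitaryGroup_iff'.mp hU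
  have hWW : W * star W = 1 := by
    rw [hWdef, Matrix.star_mul, star_star, Matrix.mul_assoc, ← Matrix.mul_assoc V, hVV,
      Matrix.one_mul, hUU']
  have hWW' : star W * W = 1 := by
    rw [hWdef, Matrix.star_mul, star_star, Matrix.mul_assoc, ← Matrix.mul_assoc U, hUU,
      Matrix.one_mul, hVV']
  have key : ∀ j, ((star U * σ * U) j j).re
      = ∑ k, Complex.normSq (W j k) * hσ.1.eigenvalues k := by
    intro j
    have hσeq : star U * σ * U
        = W * Matrix.diagonal (fun k => (hσ.1.eigenvalues k : ℂ)) * star W := by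
      conv_lhs => rw [hσ.1.spectral_theorem]
      rw [hWdef, Matrix.star_mul, star_star]
      simp only [Matrix.mul_assoc, hV]
      rw [Unitary.conjStarAlgAut_apply]; simp only [Matrix.mul_assoc]
      rfl
    rw [hσeq]
    simp only [Matrix.mul_apply, Matrix.diagonal_apply, mul_ite, ite_mul, mul_zero,
      zero_mul, Finset.sum_ite_eq', Finset.mem_univ, if_true, Matrix.star_apply, Complex.re_sum]
    refine Finset.sum_congr rfl fun k _ => ?_
    rw [mul_comm (W j k), mul_assoc]
    rw [show star (W j k) = (starRingEnd ℂ) (W j k) from rfl, Complex.mul_conj]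
    rw [← Complex.ofReal_mul, Complex.ofReal_re, mul_comm]
  have hrow : ∀ j, ∑ k, Complex.normSq (W j k) = 1 := by
    intro j
    have h1 := congrArg (fun M : Matrix n n ℂ => (M j j).re) hWW
    simpa only [Matrix.mul_apply, Matrix.star_apply,
      show ∀ z : ℂ, star z = (starRingEnd ℂ) z from fun _ => rfl, Complex.mul_conj,
      Matrix.one_apply_eq, Complex.re_sum, Complex.ofReal_re, Complex.one_re] using h1
  have hcol : ∀ k, ∑ j, Complex.normSq (W j k) = 1 := by
    intro k
    have h1 := congrArg (fun M : Matrix n n ℂ => (M k k).re) hWW'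
    simp only [Matrix.mul_apply, Matrix.star_apply,
      show ∀ z : ℂ, star z = (starRingEnd ℂ) z from fun _ => rfl,
      Matrix.one_apply_eq, Complex.re_sum, Complex.one_re] at h1
    rw [← h1]
    refine Finset.sum_congr rfl fun j _ => ?_
    rw [mul_comm, Complex.mul_conj, Complex.ofReal_re]
  have := sum_negMulLog_le (fun j k => Complex.normSq (W j k)) hσ.1.eigenvalues
    (fun j k => Complex.normSq_nonneg _) hrow hcol hσ.eigenvalues_nonneg
  calc ∑ k, Real.negMulLog (hσ.1.eigenvalues k)
      ≤ ∑ j, Real.negMulLog (∑ k, Complex.normSq (W j k) * hσ.1.eigenvalues k) := this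
    _ = ∑ j, Real.negMulLog ((star U * σ * U) j j).re := by
        refine Finset.sum_congr rfl fun j _ => ?_
        rw [key j]

lemma vnEntropy_concave {n ι : Type*} [Fintype n] [DecidableEq n] [Fintype ι]
    (p : ι → ℝ) (hp : ∀ i, 0 ≤ p i) (hp1 : ∑ i, p i = 1)
    (σ : ι → Matrix n n ℂ) (hσ : ∀ i, (σ i).PosSemidef) :
    ∑ i, p i * vnEntropy (σ i) ≤ vnEntropy (∑ i, (p i : ℂ) • σ i) := by
  have hH : (∑ i, (p i : ℂ) • σ i).IsHermitian := by
    unfold Matrix.IsHermitian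
    simp only [Matrix.conjTranspose_sum, Matrix.conjTranspose_smul, Complex.star_def,
      Complex.conj_ofReal, (hσ _).1.eq]
  set U : Matrix n n ℂ := (hH.eigenvectorUnitary : Matrix n n ℂ) with hUdef
  have hU : U ∈ Matrix.unitaryGroup n ℂ := hH.eigenvectorUnitary.2
  set d : ι → n → ℝ := fun i j => ((star U * σ i * U) j j).re with hd
  have hdnonneg : ∀ i j, 0 ≤ d i j := by
    intro i j
    have hpsd : (star U * σ i * U).PosSemidef := by
      rw [Matrix.star_eq_conjTranspose]
      exact (hσ i).conjTranspose_mul_mul_same U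
    have := hpsd.re_dotProduct_nonneg (Pi.single j 1)
    simpa [dotProduct, Matrix.mulVec, Pi.single_apply, Finset.sum_ite_eq,
      Finset.sum_ite_eq'] using this
  have keyeig : ∀ j, hH.eigenvalues j = ∑ i, p i * d i j := by
    intro j
    have hdiag := hH.conjStarAlgAut_star_eigenvectorUnitary
    rw [Unitary.conjStarAlgAut_star_apply, ← hUdef] at hdiag
    have hlin : star U * (∑ i, (p i : ℂ) • σ i) * U = ∑ i, (p i : ℂ) • (star U * σ i * U) := by
      rw [Matrix.mul_sum, Matrix.sum_mul]
      refine Finset.sum_congr rfl fun i _ => ?_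
      rw [Matrix.mul_smul, Matrix.smul_mul]
    have h2 := congrArg (fun M : Matrix n n ℂ => (M j j).re) hdiag
    simp only [hlin] at h2
    simp only [Matrix.sum_apply, Matrix.smul_apply, Matrix.diagonal_apply_eq, Function.comp,
      Complex.re_sum, smul_eq_mul, Complex.re_ofReal_mul, RCLike.ofReal_re] at h2
    exact h2.symm
  rw [vnEntropy, dif_pos hH]
  have hstep1 : ∀ i, vnEntropy (σ i)
      = (∑ k, Real.negMulLog ((hσ i).1.eigenvalues k)) / Real.log 2 := by
    intro i; rw [vnEntropy, dif_pos (hσ i).1]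
  have main : ∑ i, p i * ∑ k, Real.negMulLog ((hσ i).1.eigenvalues k)
      ≤ ∑ j, Real.negMulLog (hH.eigenvalues j) := by
    calc ∑ i, p i * ∑ k, Real.negMulLog ((hσ i).1.eigenvalues k)
        ≤ ∑ i, p i * ∑ j, Real.negMulLog (d i j) := by
          refine Finset.sum_le_sum fun i _ => mul_le_mul_of_nonneg_left ?_ (hp i)
          exact eigen_entropy_le (hσ i) hU
      _ = ∑ j, ∑ i, p i * Real.negMulLog (d i j) := by
          rw [Finset.sum_comm]
          exact Finset.sum_congr rfl fun i _ => Finset.mul_sum _ _ _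
      _ ≤ ∑ j, Real.negMulLog (∑ i, p i * d i j) :=
          Finset.sum_le_sum fun j _ => jensen_negMulLog _ _ hp hp1 (fun i => hdnonneg i j)
      _ = ∑ j, Real.negMulLog (hH.eigenvalues j) := by
          exact Finset.sum_congr rfl fun j _ => by rw [keyeig j]
  calc ∑ i, p i * vnEntropy (σ i)
      = (∑ i, p i * ∑ k, Real.negMulLog ((hσ i).1.eigenvalues k)) / Real.log 2 := by
        rw [Finset.sum_div]
        exact Finset.sum_congr rfl fun i _ => by rw [hstep1 i, mul_div_assoc]
    _ ≤ (∑ j, Real.negMulLog (hH.eigenvalues j)) / Real.log 2 := by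
        have hl2 : (0:ℝ) < Real.log 2 := Real.log_pos one_lt_two
        gcongr
    _ = _ := rfl

lemma ptraceSnd_sum_smul {a b ι : Type*} [Fintype b] [Fintype ι]
    (c : ι → ℂ) (ρ : ι → Matrix (a × b) (a × b) ℂ) :
    ptraceSnd (∑ i, c i • ρ i) = ∑ i, c i • ptraceSnd (ρ i) := by
  ext j k
  simp only [ptraceSnd, Matrix.of_apply, Matrix.sum_apply, Matrix.smul_apply, smul_eq_mul,
    Finset.mul_sum]
  rw [Finset.sum_comm]

lemma ptraceFst_sum_smul {a b ι : Type*} [Fintype a] [Fintype ι]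
    (c : ι → ℂ) (ρ : ι → Matrix (a × b) (a × b) ℂ) :
    ptraceFst (∑ i, c i • ρ i) = ∑ i, c i • ptraceFst (ρ i) := by
  ext j k
  simp only [ptraceFst, Matrix.of_apply, Matrix.sum_apply, Matrix.smul_apply, smul_eq_mul,
    Finset.mul_sum]
  rw [Finset.sum_comm]

lemma ptraceSnd_posSemidef {a b : Type*} [Fintype a] [Fintype b] [DecidableEq b]
    {ρ : Matrix (a × b) (a × b) ℂ} (hρ : ρ.PosSemidef) : (ptraceSnd ρ).PosSemidef := by
  refine Matrix.PosSemidef.of_dotProduct_mulVec_nonneg ?_ ?_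
  · ext j k
    simp only [Matrix.conjTranspose_apply, ptraceSnd, Matrix.of_apply, star_sum]
    exact Finset.sum_congr rfl fun m _ => hρ.1.apply (j, m) (k, m)
  · intro x
    have hterm : ∀ m, star (fun q : a × b => if q.2 = m then x q.1 else 0) ⬝ᵥ
        ρ *ᵥ (fun q : a × b => if q.2 = m then x q.1 else 0)
        = ∑ j, ∑ k, star (x j) * (ρ (j, m) (k, m) * x k) := by
      intro m
      simp only [dotProduct, Matrix.mulVec, Pi.star_apply, Fintype.sum_prod_type,
        apply_ite (star : ℂ → ℂ), star_zero, ite_mul, mul_ite, mul_zero, zero_mul,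
        Finset.sum_ite_eq', Finset.mem_univ, if_true, Finset.mul_sum]
      simp
    have hlhs : star x ⬝ᵥ ptraceSnd ρ *ᵥ x
        = ∑ j, ∑ m, ∑ k, star (x j) * (ρ (j, m) (k, m) * x k) := by
      simp only [dotProduct, Matrix.mulVec, Pi.star_apply, ptraceSnd, Matrix.of_apply,
        Finset.sum_mul, Finset.mul_sum]
      refine Finset.sum_congr rfl fun j _ => ?_
      rw [Finset.sum_comm]
    have key : star x ⬝ᵥ ptraceSnd ρ *ᵥ x
        = ∑ m, star (fun q : a × b => if q.2 = m then x q.1 else 0) ⬝ᵥ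
            ρ *ᵥ (fun q : a × b => if q.2 = m then x q.1 else 0) := by
      rw [hlhs, Finset.sum_comm]
      exact Finset.sum_congr rfl fun m _ => (hterm m).symm
    rw [key]
    exact Finset.sum_nonneg fun m _ => hρ.dotProduct_mulVec_nonneg _

lemma ptraceFst_posSemidef {a b : Type*} [Fintype a] [Fintype b] [DecidableEq a]
    {ρ : Matrix (a × b) (a × b) ℂ} (hρ : ρ.PosSemidef) : (ptraceFst ρ).PosSemidef := by
  refine Matrix.PosSemidef.of_dotProduct_mulVec_nonneg ?_ ?_
  · ext j k
    simp only [Matrix.conjTranspose_apply, ptraceFst, Matrix.of_apply, star_sum]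
    exact Finset.sum_congr rfl fun m _ => hρ.1.apply (m, j) (m, k)
  · intro x
    have hterm : ∀ m, star (fun q : a × b => if q.1 = m then x q.2 else 0) ⬝ᵥ
        ρ *ᵥ (fun q : a × b => if q.1 = m then x q.2 else 0)
        = ∑ j, ∑ k, star (x j) * (ρ (m, j) (m, k) * x k) := by
      intro m
      simp only [dotProduct, Matrix.mulVec, Pi.star_apply, Fintype.sum_prod_type,
        apply_ite (star : ℂ → ℂ), star_zero, ite_mul, mul_ite, mul_zero, zero_mul,
        Finset.sum_ite_eq', Finset.mem_univ, if_true, Finset.mul_sum]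
      simp
    have hlhs : star x ⬝ᵥ ptraceFst ρ *ᵥ x
        = ∑ j, ∑ m, ∑ k, star (x j) * (ρ (m, j) (m, k) * x k) := by
      simp only [dotProduct, Matrix.mulVec, Pi.star_apply, ptraceFst, Matrix.of_apply,
        Finset.sum_mul, Finset.mul_sum]
      refine Finset.sum_congr rfl fun j _ => ?_
      rw [Finset.sum_comm]
    have key : star x ⬝ᵥ ptraceFst ρ *ᵥ x
        = ∑ m, star (fun q : a × b => if q.1 = m then x q.2 else 0) ⬝ᵥ
            ρ *ᵥ (fun q : a × b => if q.1 = m then x q.2 else 0) := by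
      rw [hlhs, Finset.sum_comm]
      exact Finset.sum_congr rfl fun m _ => (hterm m).symm
    rw [key]
    exact Finset.sum_nonneg fun m _ => hρ.dotProduct_mulVec_nonneg _

/-- Information gain is bounded by entropy decrease:
Σ_i p_i I(ρ^i) − I(ρ̄) ≤ S(ρ̄) − Σ_i p_i S(ρ^i). -/
theorem info_gain_le_entropy_decrease {a b ι : Type*} [Fintype a] [Fintype b] [Fintype ι]
    [DecidableEq a] [DecidableEq b] [DecidableEq ι]
    (p : ι → ℝ) (hp : ∀ i, 0 ≤ p i) (hp1 : ∑ i, p i = 1)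
    (ρ : ι → Matrix (a × b) (a × b) ℂ)
    (hρ : ∀ i, (ρ i).PosSemidef ∧ (ρ i).trace = 1) :
    ∑ i, p i * mutInfo (ρ i) - mutInfo (∑ i, (p i : ℂ) • ρ i)
      ≤ vnEntropy (∑ i, (p i : ℂ) • ρ i) - ∑ i, p i * vnEntropy (ρ i) := by
  have hA : ∑ i, p i * vnEntropy (ptraceSnd (ρ i))
      ≤ vnEntropy (ptraceSnd (∑ i, (p i : ℂ) • ρ i)) := by
    rw [ptraceSnd_sum_smul]
    exact vnEntropy_concave p hp hp1 _ (fun i => ptraceSnd_posSemidef (hρ i).1)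
  have hB : ∑ i, p i * vnEntropy (ptraceFst (ρ i))
      ≤ vnEntropy (ptraceFst (∑ i, (p i : ℂ) • ρ i)) := by
    rw [ptraceFst_sum_smul]
    exact vnEntropy_concave p hp hp1 _ (fun i => ptraceFst_posSemidef (hρ i).1)
  simp only [mutInfo]
  have expand : ∑ i, p i * (vnEntropy (ptraceSnd (ρ i)) + vnEntropy (ptraceFst (ρ i))
        - vnEntropy (ρ i))
      = ∑ i, p i * vnEntropy (ptraceSnd (ρ i)) + ∑ i, p i * vnEntropy (ptraceFst (ρ i))
        - ∑ i, p i * vnEntropy (ρ i) := by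
    rw [← Finset.sum_add_distrib, ← Finset.sum_sub_distrib]
    exact Finset.sum_congr rfl fun i _ => by ring
  rw [expand]
  linarith
end

section
/- Shannon-entropy lower bound for GHZ-to-EPR conversion: if {p_i} is a probability distribution, {ρ^i_{AB}} are two-qubit maximally entangled pure states, and Σ_i p_i ρ^i_{AB} = (|00⟩⟨00| + |11⟩⟨11|)/2, then H({p_i}) ≥ 1. -/
open Matrix Kronecker ComplexOrder

/-- The maximally classically correlated two-qubit state (|00⟩⟨00| + |11⟩⟨11|)/2. -/
noncomputable def rhoCorr : Matrix (Fin 2 × Fin 2) (Fin 2 × Fin 2) ℂ :=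
  Matrix.of fun x y => if x = y ∧ x.1 = x.2 then (1/2 : ℂ) else 0

/-- Shannon-entropy lower bound for GHZ-to-EPR conversion: if {p_i} is a probability
distribution and {ρ^i} are two-qubit maximally entangled pure states averaging to
(|00⟩⟨00| + |11⟩⟨11|)/2, then H({p_i}) ≥ 1 (entropies in bits). -/
theorem shannon_bound_GHZ_EPR {ι : Type*} [Fintype ι] [DecidableEq ι]
    (p : ι → ℝ) (hp : ∀ i, 0 ≤ p i) (hp1 : ∑ i, p i = 1)
    (ρ : ι → Matrix (Fin 2 × Fin 2) (Fin 2 × Fin 2) ℂ)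
    (hpure : ∀ i, ∃ v : Fin 2 × Fin 2 → ℂ,
      ρ i = Matrix.vecMulVec v (star v) ∧
      ptraceSnd (ρ i) = (1/2 : ℂ) • (1 : Matrix (Fin 2) (Fin 2) ℂ) ∧
      ptraceFst (ρ i) = (1/2 : ℂ) • (1 : Matrix (Fin 2) (Fin 2) ℂ))
    (havg : ∑ i, (p i : ℂ) • ρ i = rhoCorr) :
    1 ≤ (∑ i, Real.negMulLog (p i)) / Real.log 2 := by
  choose v hv hSnd hFst using hpure
  -- diagonal entry ((0,1),(0,1)) of the average is 0
  have hA : ∑ i, p i * Complex.normSq (v i ((0:Fin 2),(1:Fin 2))) = 0 := by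
    have h0 : ∑ i, (p i : ℂ) * (ρ i ((0:Fin 2),(1:Fin 2)) ((0:Fin 2),(1:Fin 2))) = 0 := by
      have := congrFun (congrFun havg ((0:Fin 2),(1:Fin 2))) ((0:Fin 2),(1:Fin 2))
      simpa [rhoCorr, Matrix.sum_apply, Matrix.smul_apply, smul_eq_mul] using this
    have : ∑ i, ((p i * Complex.normSq (v i ((0:Fin 2),(1:Fin 2)))) : ℂ) = 0 := by
      rw [← h0]
      refine Finset.sum_congr rfl fun i _ => ?_
      rw [hv i]
      simp [Matrix.vecMulVec_apply, Complex.mul_conj]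
    exact_mod_cast this
  have hB : ∑ i, p i * Complex.normSq (v i ((1:Fin 2),(0:Fin 2))) = 0 := by
    have h0 : ∑ i, (p i : ℂ) * (ρ i ((1:Fin 2),(0:Fin 2)) ((1:Fin 2),(0:Fin 2))) = 0 := by
      have := congrFun (congrFun havg ((1:Fin 2),(0:Fin 2))) ((1:Fin 2),(0:Fin 2))
      simpa [rhoCorr, Matrix.sum_apply, Matrix.smul_apply, smul_eq_mul] using this
    have : ∑ i, ((p i * Complex.normSq (v i ((1:Fin 2),(0:Fin 2)))) : ℂ) = 0 := by
      rw [← h0]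
      refine Finset.sum_congr rfl fun i _ => ?_
      rw [hv i]
      simp [Matrix.vecMulVec_apply, Complex.mul_conj]
    exact_mod_cast this
  -- termwise vanishing
  have hA' : ∀ i, p i * Complex.normSq (v i ((0:Fin 2),(1:Fin 2))) = 0 := by
    have := (Finset.sum_eq_zero_iff_of_nonneg (fun i _ =>
      mul_nonneg (hp i) (Complex.normSq_nonneg _))).1 hA
    exact fun i => this i (Finset.mem_univ i)
  have hB' : ∀ i, p i * Complex.normSq (v i ((1:Fin 2),(0:Fin 2))) = 0 := by
    have := (Finset.sum_eq_zero_iff_of_nonneg (fun i _ =>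
      mul_nonneg (hp i) (Complex.normSq_nonneg _))).1 hB
    exact fun i => this i (Finset.mem_univ i)
  -- key: for p i > 0 the off-diagonal entry has modulus 1/2
  have hkey : ∀ i, 0 < p i → ‖ρ i ((0:Fin 2),(0:Fin 2)) ((1:Fin 2),(1:Fin 2))‖ = 1/2 := by
    intro i hpi
    have h01 : v i ((0:Fin 2),(1:Fin 2)) = 0 := by
      have := hA' i
      have hn : Complex.normSq (v i ((0:Fin 2),(1:Fin 2))) = 0 := by
        rcases mul_eq_zero.1 this with h | h
        · exact absurd h (ne_of_gt hpi)
        · exact h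
      exact Complex.normSq_eq_zero.1 hn
    have h10 : v i ((1:Fin 2),(0:Fin 2)) = 0 := by
      have := hB' i
      have hn : Complex.normSq (v i ((1:Fin 2),(0:Fin 2))) = 0 := by
        rcases mul_eq_zero.1 this with h | h
        · exact absurd h (ne_of_gt hpi)
        · exact h
      exact Complex.normSq_eq_zero.1 hn
    -- reduced state conditions
    have hS0 : (ptraceSnd (ρ i)) 0 0 = (1/2 : ℂ) := by
      rw [hSnd i]; simp [Matrix.smul_apply, Matrix.one_apply]
    have hS1 : (ptraceSnd (ρ i)) 1 1 = (1/2 : ℂ) := by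
      rw [hSnd i]; simp [Matrix.smul_apply, Matrix.one_apply]
    have hn00 : (Complex.normSq (v i ((0:Fin 2),(0:Fin 2))) : ℂ) = 1/2 := by
      have := hS0
      rw [show (ptraceSnd (ρ i)) 0 0 = ∑ k : Fin 2, ρ i (0,k) (0,k) from rfl,
        Fin.sum_univ_two, hv i] at this
      simpa [Matrix.vecMulVec_apply, Complex.mul_conj, h01] using this
    have hn11 : (Complex.normSq (v i ((1:Fin 2),(1:Fin 2))) : ℂ) = 1/2 := by
      have := hS1
      rw [show (ptraceSnd (ρ i)) 1 1 = ∑ k : Fin 2, ρ i (1,k) (1,k) from rfl,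
        Fin.sum_univ_two, hv i] at this
      simpa [Matrix.vecMulVec_apply, Complex.mul_conj, h10] using this
    have hn00' : Complex.normSq (v i ((0:Fin 2),(0:Fin 2))) = 1/2 := by
      have h2 : ((Complex.normSq (v i ((0:Fin 2),(0:Fin 2))) : ℝ) : ℂ) = ((1/2 : ℝ) : ℂ) := by
        rw [hn00]; norm_num
      exact_mod_cast h2
    have hn11' : Complex.normSq (v i ((1:Fin 2),(1:Fin 2))) = 1/2 := by
      have h2 : ((Complex.normSq (v i ((1:Fin 2),(1:Fin 2))) : ℝ) : ℂ) = ((1/2 : ℝ) : ℂ) := by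
        rw [hn11]; norm_num
      exact_mod_cast h2
    rw [hv i]
    simp only [Matrix.vecMulVec_apply, Pi.star_apply]
    set x := ‖v i ((0:Fin 2),(0:Fin 2)) * star (v i ((1:Fin 2),(1:Fin 2)))‖ with hx
    have hx0 : 0 ≤ x := norm_nonneg _
    have hsq : x ^ 2 = (1/2 : ℝ) ^ 2 := by
      rw [hx, Complex.sq_norm, Complex.normSq_mul, Complex.star_def, Complex.normSq_conj,
        hn00', hn11']
      norm_num
    calc x = Real.sqrt (x ^ 2) := (Real.sqrt_sq hx0).symm
      _ = Real.sqrt ((1/2 : ℝ) ^ 2) := by rw [hsq]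
      _ = 1/2 := Real.sqrt_sq (by norm_num)
  -- sum of off-diagonal entries is 0
  have hC : ∑ i, (p i : ℂ) * (ρ i ((0:Fin 2),(0:Fin 2)) ((1:Fin 2),(1:Fin 2))) = 0 := by
    have := congrFun (congrFun havg ((0:Fin 2),(0:Fin 2))) ((1:Fin 2),(1:Fin 2))
    simpa [rhoCorr, Matrix.sum_apply, Matrix.smul_apply, smul_eq_mul] using this
  -- hence every p j ≤ 1/2
  have hhalf : ∀ j, p j ≤ 1/2 := by
    intro j
    rcases eq_or_lt_of_le (hp j) with h | hpj
    · rw [← h]; norm_num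
    have hsplit : (p j : ℂ) * (ρ j ((0:Fin 2),(0:Fin 2)) ((1:Fin 2),(1:Fin 2)))
        = - ∑ i ∈ Finset.univ.erase j, (p i : ℂ) * (ρ i ((0:Fin 2),(0:Fin 2)) ((1:Fin 2),(1:Fin 2))) := by
      have h2 := Finset.add_sum_erase Finset.univ
        (fun i => (p i : ℂ) * (ρ i ((0:Fin 2),(0:Fin 2)) ((1:Fin 2),(1:Fin 2)))) (Finset.mem_univ j)
      rw [hC] at h2
      linear_combination h2
    have habs : p j * (1/2) ≤ ∑ i ∈ Finset.univ.erase j, p i * (1/2) := by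
      calc p j * (1/2)
          = ‖(p j : ℂ) * (ρ j ((0:Fin 2),(0:Fin 2)) ((1:Fin 2),(1:Fin 2)))‖ := by
            rw [norm_mul, Complex.norm_of_nonneg (hp j), hkey j hpj]
        _ = ‖∑ i ∈ Finset.univ.erase j, (p i : ℂ) * (ρ i ((0:Fin 2),(0:Fin 2)) ((1:Fin 2),(1:Fin 2)))‖ := by
            rw [hsplit, norm_neg]
        _ ≤ ∑ i ∈ Finset.univ.erase j, ‖(p i : ℂ) * (ρ i ((0:Fin 2),(0:Fin 2)) ((1:Fin 2),(1:Fin 2)))‖ := by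
            exact norm_sum_le _ _
        _ ≤ ∑ i ∈ Finset.univ.erase j, p i * (1/2) := by
            refine Finset.sum_le_sum fun i _ => ?_
            rcases eq_or_lt_of_le (hp i) with h | hpi
            · simp [← h]
            · rw [norm_mul, Complex.norm_of_nonneg (hp i), hkey i hpi]
    have hsum : ∑ i ∈ Finset.univ.erase j, p i = 1 - p j := by
      have h2 := Finset.add_sum_erase Finset.univ p (Finset.mem_univ j)
      rw [hp1] at h2
      linarith
    rw [← Finset.sum_mul, hsum] at habs
    linarith
  -- conclude entropy bound
  have hlog2 : 0 < Real.log 2 := Real.log_pos (by norm_num)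
  rw [le_div_iff₀ hlog2, one_mul]
  calc Real.log 2 = ∑ i, p i * Real.log 2 := by rw [← Finset.sum_mul, hp1, one_mul]
    _ ≤ ∑ i, Real.negMulLog (p i) := by
        refine Finset.sum_le_sum fun i _ => ?_
        rcases eq_or_lt_of_le (hp i) with h | hpi
        · simp [← h, Real.negMulLog]
        · rw [Real.negMulLog]
          have hlogle : Real.log (p i) ≤ Real.log (1/2) := Real.log_le_log hpi (hhalf i)
          rw [show Real.log (1/2) = - Real.log 2 by
            rw [one_div, Real.log_inv]] at hlogle
          nlinarith
end

section
/- Optimal ensemble for two orthogonal-support states: for a family of states ρ_F = F·ρ_even + (1−F)·ρ_odd with F ∈ [1/3, 1], where ρ_even, ρ_odd are orthogonal density matrices each of entropy 1, the maximal Holevo quantity over all ensembles {(p_i, ρ_{F_i})} equals max_{p∈[0,1]} [H((2p+1)/3) − (1−p)H(1/3)], where H is binary entropy in bits. -/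
open Matrix Kronecker ComplexOrder

/-- Binary entropy in bits. -/
noncomputable def H2 (x : ℝ) : ℝ := Real.binEntropy x / Real.log 2

/-- ρ_even = (|00⟩⟨00| + |11⟩⟨11|)/2. -/
noncomputable def rhoEven : Matrix (Fin 2 × Fin 2) (Fin 2 × Fin 2) ℂ :=
  Matrix.of fun x y => if x = y ∧ x.1 = x.2 then (1/2 : ℂ) else 0

/-- ρ_odd = (|01⟩⟨01| + |10⟩⟨10|)/2. -/
noncomputable def rhoOdd : Matrix (Fin 2 × Fin 2) (Fin 2 × Fin 2) ℂ :=
  Matrix.of fun x y => if x = y ∧ x.1 ≠ x.2 then (1/2 : ℂ) else 0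

/-- ρ_F = F·ρ_even + (1−F)·ρ_odd. -/
noncomputable def rhoF (F : ℝ) : Matrix (Fin 2 × Fin 2) (Fin 2 × Fin 2) ℂ :=
  (F : ℂ) • rhoEven + ((1 - F : ℝ) : ℂ) • rhoOdd

section AuxSpectral
open Polynomial

private lemma charpoly_diag' {n : Type*} [Fintype n] [DecidableEq n] (d : n → ℂ) :
    (Matrix.diagonal d).charpoly = ∏ i, (X - C (d i)) := by
  have h : Matrix.charmatrix (Matrix.diagonal d)
      = Matrix.diagonal (fun i => X - C (d i)) := by
    ext i j
    by_cases hij : i = j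
    · subst hij; simp [Matrix.charmatrix_apply_eq]
    · simp [Matrix.charmatrix_apply_ne _ _ _ hij, Matrix.diagonal_apply_ne _ hij]
  rw [Matrix.charpoly, h, Matrix.det_diagonal]

private lemma charpoly_conj_unitary' {n : Type*} [Fintype n] [DecidableEq n]
    (U : Matrix.unitaryGroup n ℂ) (A : Matrix n n ℂ) :
    ((U : Matrix n n ℂ) * A * star (U : Matrix n n ℂ)).charpoly = A.charpoly := by
  let m : Matrix n n ℂ →+* Matrix n n ℂ[X] := (C : ℂ →+* ℂ[X]).mapMatrix
  have hsc : ∀ M : Matrix n n ℂ[X],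
      Matrix.scalar n (X : ℂ[X]) * M = M * Matrix.scalar n X :=
    fun M => (Matrix.scalar_commute (X : ℂ[X]) (fun r => (Commute.all X r)) M).eq
  have hUU : (U : Matrix n n ℂ) * star (U : Matrix n n ℂ) = 1 :=
    Matrix.mem_unitaryGroup_iff.mp U.2
  have hUU' : star (U : Matrix n n ℂ) * (U : Matrix n n ℂ) = 1 :=
    Matrix.mem_unitaryGroup_iff'.mp U.2
  have hcm : Matrix.charmatrix ((U : Matrix n n ℂ) * A * star (U : Matrix n n ℂ))
      = m (U : Matrix n n ℂ) * Matrix.charmatrix A * m (star (U : Matrix n n ℂ)) := by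
    rw [Matrix.charmatrix, Matrix.charmatrix]
    simp only [mul_sub, sub_mul]
    congr 1
    · rw [← hsc, Matrix.mul_assoc, ← _root_.map_mul m, hUU]
      simp [m]
    · show _ = m _ * m A * m _
      rw [← _root_.map_mul m, ← _root_.map_mul m]
  rw [Matrix.charpoly, hcm, Matrix.det_mul, Matrix.det_mul, mul_comm, ← mul_assoc,
    ← Matrix.det_mul, ← _root_.map_mul m, hUU']
  simp [Matrix.charpoly, m]

private lemma roots_prod' {n : Type*} [Fintype n] (a : n → ℂ) :
    (∏ i, (X - C (a i))).roots = Finset.univ.val.map a := by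
  rw [Finset.prod_eq_multiset_prod]
  have h : Multiset.map (fun i => X - C (a i)) Finset.univ.val
      = Multiset.map (fun z => X - C z) (Multiset.map a Finset.univ.val) := by
    rw [Multiset.map_map]; rfl
  rw [h, Polynomial.roots_multiset_prod_X_sub_C]

private lemma eig_sum_negMulLog' {n : Type*} [Fintype n] [DecidableEq n]
    (A : Matrix n n ℂ) (hA : A.IsHermitian) (d : n → ℝ)
    (hdiag : A = Matrix.diagonal (fun i => (d i : ℂ))) :
    ∑ i, Real.negMulLog (hA.eigenvalues i) = ∑ i, Real.negMulLog (d i) := by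
  have h1 : A.charpoly = ∏ i, (X - C ((hA.eigenvalues i : ℝ) : ℂ)) := by
    conv_lhs => rw [hA.spectral_theorem]
    rw [Unitary.conjStarAlgAut_apply, charpoly_conj_unitary', charpoly_diag']; rfl
  have h2 : A.charpoly = ∏ i, (X - C ((d i : ℝ) : ℂ)) := by
    conv_lhs => rw [hdiag]; rw [charpoly_diag']
  have hm : Finset.univ.val.map (fun i => ((hA.eigenvalues i : ℝ) : ℂ))
      = Finset.univ.val.map (fun i => ((d i : ℝ) : ℂ)) := by
    rw [← roots_prod', ← roots_prod', ← h1, ← h2]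
  have hm' : Finset.univ.val.map hA.eigenvalues = Finset.univ.val.map d := by
    apply Multiset.map_injective Complex.ofReal_injective
    rw [Multiset.map_map, Multiset.map_map]
    exact hm
  calc ∑ i, Real.negMulLog (hA.eigenvalues i)
      = ((Finset.univ.val.map hA.eigenvalues).map Real.negMulLog).sum := by
        rw [Multiset.map_map, Finset.sum_eq_multiset_sum]; rfl
    _ = ((Finset.univ.val.map d).map Real.negMulLog).sum := by rw [hm']
    _ = ∑ i, Real.negMulLog (d i) := by
        rw [Multiset.map_map, Finset.sum_eq_multiset_sum]; rfl

end AuxSpectral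
section AuxRhoF

private noncomputable def dch (F : ℝ) : Fin 2 × Fin 2 → ℝ :=
  fun x => if x.1 = x.2 then F/2 else (1-F)/2

private lemma rhoF_eq_diagonal (F : ℝ) :
    rhoF F = Matrix.diagonal (fun x => ((dch F x : ℝ) : ℂ)) := by
  ext x y
  by_cases hxy : x = y
  · subst hxy
    by_cases h : x.1 = x.2 <;>
      simp [rhoF, rhoEven, rhoOdd, dch, h, Matrix.diagonal_apply_eq] <;> push_cast <;> ring
  · simp [rhoF, rhoEven, rhoOdd, dch, hxy, Matrix.diagonal_apply_ne _ hxy]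

private lemma rhoF_isHermitian (F : ℝ) : (rhoF F).IsHermitian := by
  rw [rhoF_eq_diagonal]
  apply Matrix.isHermitian_diagonal_of_self_adjoint
  funext i
  exact Complex.conj_ofReal _

private lemma negMulLog_half {x : ℝ} (hx : 0 ≤ x) :
    Real.negMulLog (x/2) = Real.negMulLog x / 2 + x / 2 * Real.log 2 := by
  rcases eq_or_lt_of_le hx with h | h
  · simp [← h]
  · rw [Real.negMulLog, Real.negMulLog, Real.log_div h.ne' (by norm_num)]
    ring

private lemma vnEntropy_rhoF {F : ℝ} (h0 : 0 ≤ F) (h1 : F ≤ 1) :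
    vnEntropy (rhoF F) = H2 F + 1 := by
  rw [vnEntropy, dif_pos (rhoF_isHermitian F),
    eig_sum_negMulLog' _ (rhoF_isHermitian F) (dch F) (rhoF_eq_diagonal F)]
  have hsum : ∑ x : Fin 2 × Fin 2, Real.negMulLog (dch F x)
      = 2 * Real.negMulLog (F/2) + 2 * Real.negMulLog ((1-F)/2) := by
    rw [Fintype.sum_prod_type]
    simp [Fin.sum_univ_two, dch]
    ring
  rw [hsum, negMulLog_half h0, negMulLog_half (by linarith),
    H2, Real.binEntropy_eq_negMulLog_add_negMulLog_one_sub]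
  have hl : Real.log 2 ≠ 0 := by positivity
  field_simp
  ring

private lemma rhoF_mix {n : ℕ} (p F : Fin n → ℝ) (hsum : ∑ i, p i = 1) :
    ∑ i, (p i : ℂ) • rhoF (F i) = rhoF (∑ i, p i * F i) := by
  have hs : ∑ i, p i * (1 - F i) = (∑ i, p i) - ∑ i, p i * F i := by
    rw [← Finset.sum_sub_distrib]
    exact Finset.sum_congr rfl fun i _ => by ring
  simp only [rhoF_eq_diagonal]
  ext x y
  by_cases hxy : x = y
  · subst hxy
    simp only [Matrix.sum_apply, Matrix.smul_apply, Matrix.diagonal_apply_eq, smul_eq_mul]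
    by_cases h : x.1 = x.2
    · simp only [dch, h, if_true]
      push_cast
      rw [Finset.sum_div]
      exact Finset.sum_congr rfl fun i _ => by ring
    · simp only [dch, h, if_false]
      rw [show (1:ℝ) - ∑ i, p i * F i = ∑ i, p i * (1 - F i) by rw [hs, hsum]]
      push_cast
      rw [Finset.sum_div]
      exact Finset.sum_congr rfl fun i _ => by ring
  · simp [Matrix.sum_apply, Matrix.diagonal_apply_ne _ hxy]

private lemma H2_chord {F : ℝ} (h1 : 1/3 ≤ F) (h2 : F ≤ 1) :
    (3*(1-F)/2) * H2 (1/3) ≤ H2 F := by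
  have hc := Real.strictConcave_binEntropy.concaveOn
  have key := hc.2 (show (1:ℝ)/3 ∈ Set.Icc (0:ℝ) 1 by norm_num)
    (show (1:ℝ) ∈ Set.Icc (0:ℝ) 1 by norm_num)
    (show (0:ℝ) ≤ 3*(1-F)/2 by linarith) (show (0:ℝ) ≤ (3*F-1)/2 by linarith)
    (show 3*(1-F)/2 + (3*F-1)/2 = 1 by ring)
  simp only [smul_eq_mul, Real.binEntropy_one, mul_zero, add_zero, mul_one] at key
  rw [show 3*(1-F)/2 * (1/3) + (3*F-1)/2 = F by ring] at key
  have hl : (0:ℝ) < Real.log 2 := by positivity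
  rw [H2, H2, ← mul_div_assoc]
  gcongr

private lemma H2_nonneg {x : ℝ} (h0 : 0 ≤ x) (h1 : x ≤ 1) : 0 ≤ H2 x := by
  have hl : (0:ℝ) < Real.log 2 := by positivity
  exact div_nonneg (Real.binEntropy_nonneg h0 h1) hl.le

private lemma H2_le_one (x : ℝ) : H2 x ≤ 1 := by
  have hl : (0:ℝ) < Real.log 2 := by positivity
  rw [H2, div_le_one hl]
  exact Real.binEntropy_le_log_two

end AuxRhoF
/-- The maximal Holevo quantity over all ensembles {(p_i, ρ_{F_i})} with F_i ∈ [1/3, 1]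
equals max over p ∈ [0,1] of H((2p+1)/3) − (1−p)·H(1/3). -/
theorem max_holevo_rhoF :
    sSup {x : ℝ | ∃ (n : ℕ) (p : Fin n → ℝ) (F : Fin n → ℝ),
        (∀ i, 0 ≤ p i) ∧ (∑ i, p i = 1) ∧ (∀ i, F i ∈ Set.Icc (1/3 : ℝ) 1) ∧
        x = vnEntropy (∑ i, (p i : ℂ) • rhoF (F i)) - ∑ i, p i * vnEntropy (rhoF (F i))}
      = sSup {y : ℝ | ∃ p ∈ Set.Icc (0 : ℝ) 1,
          y = H2 ((2 * p + 1) / 3) - (1 - p) * H2 (1/3)} := by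
  set S₁ := {x : ℝ | ∃ (n : ℕ) (p : Fin n → ℝ) (F : Fin n → ℝ),
        (∀ i, 0 ≤ p i) ∧ (∑ i, p i = 1) ∧ (∀ i, F i ∈ Set.Icc (1/3 : ℝ) 1) ∧
        x = vnEntropy (∑ i, (p i : ℂ) • rhoF (F i)) - ∑ i, p i * vnEntropy (rhoF (F i))}
    with hS₁
  set S₂ := {y : ℝ | ∃ p ∈ Set.Icc (0 : ℝ) 1,
          y = H2 ((2 * p + 1) / 3) - (1 - p) * H2 (1/3)} with hS₂
  have h13 : (0:ℝ) ≤ 1/3 := by norm_num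
  have h131 : (1:ℝ)/3 ≤ 1 := by norm_num
  -- S₂ ⊆ S₁
  have hsub : S₂ ⊆ S₁ := by
    rintro y ⟨p, ⟨hp0, hp1⟩, rfl⟩
    refine ⟨2, ![p, 1-p], ![1, 1/3], ?_, ?_, ?_, ?_⟩
    · intro i; fin_cases i <;> simp <;> linarith
    · simp [Fin.sum_univ_two]
    · intro i; fin_cases i <;> constructor <;> norm_num
    · have hps : ∑ i, (![p, 1-p]) i = 1 := by simp [Fin.sum_univ_two]
      rw [rhoF_mix _ _ hps]
      have hF : (∑ i, (![p, 1-p]) i * (![(1:ℝ), 1/3]) i) = (2*p+1)/3 := by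
        simp [Fin.sum_univ_two]; ring
      rw [hF, vnEntropy_rhoF (by linarith) (by linarith)]
      have e1 : vnEntropy (rhoF 1) = H2 1 + 1 := vnEntropy_rhoF zero_le_one le_rfl
      have e2 : vnEntropy (rhoF (1/3)) = H2 (1/3) + 1 := vnEntropy_rhoF h13 h131
      have h21 : H2 1 = 0 := by simp [H2]
      rw [Fin.sum_univ_two]
      simp only [Matrix.cons_val_zero, Matrix.cons_val_one, Matrix.head_cons, e1, e2, h21]
      ring
  -- every element of S₁ is dominated by an element of S₂
  have key : ∀ x ∈ S₁, ∃ y ∈ S₂, x ≤ y := by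
    rintro x ⟨n, p, F, hp0, hp1, hF, rfl⟩
    set Fb := ∑ i, p i * F i with hFbdef
    have hFb1 : 1/3 ≤ Fb := by
      have : (1:ℝ)/3 = ∑ i, p i * (1/3) := by rw [← Finset.sum_mul, hp1, one_mul]
      rw [this]
      exact Finset.sum_le_sum fun i _ => mul_le_mul_of_nonneg_left (hF i).1 (hp0 i)
    have hFb2 : Fb ≤ 1 := by
      have h1 : Fb ≤ ∑ i, p i * 1 :=
        Finset.sum_le_sum fun i _ => mul_le_mul_of_nonneg_left (hF i).2 (hp0 i)
      simpa [hp1] using h1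
    refine ⟨H2 Fb - (1 - (3*Fb-1)/2) * H2 (1/3),
      ⟨(3*Fb-1)/2, ⟨by linarith, by linarith⟩, by
        rw [show (2*((3*Fb-1)/2)+1)/3 = Fb by ring]⟩, ?_⟩
    rw [rhoF_mix p F hp1, ← hFbdef, vnEntropy_rhoF (by linarith) hFb2]
    have hE : ∀ i ∈ Finset.univ, p i * vnEntropy (rhoF (F i)) = p i * H2 (F i) + p i := by
      intro i _
      rw [vnEntropy_rhoF (by linarith [(hF i).1]) (hF i).2]; ring
    have hx : ∑ i, p i * vnEntropy (rhoF (F i)) = (∑ i, p i * H2 (F i)) + 1 := by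
      rw [Finset.sum_congr rfl hE, Finset.sum_add_distrib, hp1]
    rw [hx]
    have hchord : (1 - (3*Fb-1)/2) * H2 (1/3) ≤ ∑ i, p i * H2 (F i) := by
      have hle : ∑ i, p i * ((3*(1-F i)/2) * H2 (1/3)) ≤ ∑ i, p i * H2 (F i) :=
        Finset.sum_le_sum fun i _ =>
          mul_le_mul_of_nonneg_left (H2_chord (hF i).1 (hF i).2) (hp0 i)
      have heq : ∑ i, p i * ((3*(1-F i)/2) * H2 (1/3))
          = (1 - (3*Fb-1)/2) * H2 (1/3) := by
        have h1 : ∑ i, p i * ((3*(1-F i)/2) * H2 (1/3))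
            = (∑ i, (p i - p i * F i)) * ((3/2) * H2 (1/3)) := by
          rw [Finset.sum_mul]
          exact Finset.sum_congr rfl fun i _ => by ring
        rw [h1, Finset.sum_sub_distrib, hp1, ← hFbdef]
        ring
      linarith
    linarith
  -- boundedness and nonemptiness
  have hne2 : S₂.Nonempty := ⟨H2 ((2*0+1)/3) - (1-0) * H2 (1/3), 0, ⟨le_rfl, zero_le_one⟩, rfl⟩
  have hb2 : ∀ y ∈ S₂, y ≤ 1 := by
    rintro y ⟨p, ⟨hp0, hp1⟩, rfl⟩
    have h1 := H2_le_one ((2*p+1)/3)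
    have h2 := H2_nonneg h13 h131
    nlinarith
  have hbdd2 : BddAbove S₂ := ⟨1, hb2⟩
  have hbdd1 : BddAbove S₁ := by
    refine ⟨1, fun x hx => ?_⟩
    obtain ⟨y, hy, hxy⟩ := key x hx
    exact hxy.trans (hb2 y hy)
  have hne1 : S₁.Nonempty := hne2.mono hsub
  apply le_antisymm
  · apply csSup_le hne1
    intro x hx
    obtain ⟨y, hy, hxy⟩ := key x hx
    exact hxy.trans (le_csSup hbdd2 hy)
  · exact csSup_le_csSup hbdd1 hne2 hsub
end
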